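/- For every ω ∈ ℝ, the function F : [0,∞) → ℝ defined by F(η) = ∫₀^η sin(η − s) · sin(s + ω)³ ds is unbounded, i.e. sup_{η ≥ 0} |F(η)| = ∞. -/

import Mathlib

open Real

private lemma sin_cube_id (u v : ℝ) :
    Real.sin u * Real.sin v ^ 3 =
      3/8 * (Real.cos (u - v) - Real.cos (u + v))
        - 1/8 * (Real.cos (u - 3*v) - Real.cos (u + 3*v)) := by
  simp only [Real.cos_sub, Real.cos_add, Real.cos_three_mul, Real.sin_three_mul]
  ring

private lemma hasDeriv_G (η ω x : ℝ) :
    HasDerivAt (fun x : ℝ =>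
        -(3/16) * Real.sin (η - 2*x - ω) - 3/8 * x * Real.cos (η + ω)
          + 1/32 * Real.sin (η - 4*x - 3*ω) + 1/16 * Real.sin (η + 2*x + 3*ω))
      (Real.sin (η - x) * Real.sin (x + ω) ^ 3) x := by
  have A : HasDerivAt (fun x : ℝ => η - 2*x - ω) (-2) x := by
    simpa using (((hasDerivAt_id x).const_mul (2:ℝ)).const_sub η).sub_const ω
  have B : HasDerivAt (fun x : ℝ => η - 4*x - 3*ω) (-4) x := by
    simpa using (((hasDerivAt_id x).const_mul (4:ℝ)).const_sub η).sub_const (3*ω)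
  have C : HasDerivAt (fun x : ℝ => η + 2*x + 3*ω) 2 x := by
    simpa using (((hasDerivAt_id x).const_mul (2:ℝ)).const_add η).add_const (3*ω)
  have D : HasDerivAt (fun x : ℝ => 3/8 * x * Real.cos (η + ω))
      (3/8 * Real.cos (η + ω)) x := by
    simpa [mul_comm, mul_assoc, mul_left_comm] using
      ((hasDerivAt_id x).const_mul (3/8 * Real.cos (η + ω)))
  have h := ((((A.sin.const_mul (-(3/16))).sub D).add
      (B.sin.const_mul (1/32))).add (C.sin.const_mul (1/16)))
  refine h.congr_deriv ?_
  have e1 : (η - x) - (x + ω) = η - 2*x - ω := by ring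
  have e2 : (η - x) + (x + ω) = η + ω := by ring
  have e3 : (η - x) - 3*(x + ω) = η - 4*x - 3*ω := by ring
  have e4 : (η - x) + 3*(x + ω) = η + 2*x + 3*ω := by ring
  have := sin_cube_id (η - x) (x + ω)
  rw [e1, e2, e3, e4] at this
  rw [this]; ring

theorem stmt_17 (ω : ℝ) :
    ∀ M : ℝ, ∃ η : ℝ, 0 ≤ η ∧
      M < |∫ s in (0 : ℝ)..η, Real.sin (η - s) * Real.sin (s + ω) ^ 3| := by
  intro M
  obtain ⟨n, hn⟩ := exists_nat_gt (|ω| + 3*|M| + 3)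
  have hpi := Real.pi_gt_three
  have hωle := le_abs_self ω
  have hωge := neg_abs_le ω
  have hMle := le_abs_self M
  have hn0 : (0:ℝ) ≤ n := Nat.cast_nonneg n
  set η : ℝ := 2*π*n - ω with hη
  clear_value η
  have hη0 : 0 ≤ η := by
    rw [hη]
    nlinarith [abs_nonneg M]
  refine ⟨η, hη0, ?_⟩
  have hcont : Continuous fun s : ℝ => Real.sin (η - s) * Real.sin (s + ω) ^ 3 := by
    fun_prop
  have hint : (∫ s in (0:ℝ)..η, Real.sin (η - s) * Real.sin (s + ω) ^ 3)
      = (-(3/16) * Real.sin (η - 2*η - ω) - 3/8 * η * Real.cos (η + ω)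
          + 1/32 * Real.sin (η - 4*η - 3*ω) + 1/16 * Real.sin (η + 2*η + 3*ω))
        - (-(3/16) * Real.sin (η - 2*0 - ω) - 3/8 * 0 * Real.cos (η + ω)
          + 1/32 * Real.sin (η - 4*0 - 3*ω) + 1/16 * Real.sin (η + 2*0 + 3*ω)) := by
    exact intervalIntegral.integral_eq_sub_of_hasDerivAt
      (fun x _ => hasDeriv_G η ω x) (hcont.intervalIntegrable 0 η)
  have c1 : Real.cos (η + ω) = 1 := by
    have : η + ω = (n : ℝ) * (2 * π) := by rw [hη]; ring
    rw [this, Real.cos_nat_mul_two_pi]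
  have s1 : Real.sin (η - 2*η - ω) = 0 := by
    have : η - 2*η - ω = -(((2*n : ℕ) : ℝ) * π) := by rw [hη]; push_cast; ring
    rw [this, Real.sin_neg, Real.sin_nat_mul_pi, neg_zero]
  have s2 : Real.sin (η - 4*η - 3*ω) = 0 := by
    have : η - 4*η - 3*ω = -(((6*n : ℕ) : ℝ) * π) := by rw [hη]; push_cast; ring
    rw [this, Real.sin_neg, Real.sin_nat_mul_pi, neg_zero]
  have s3 : Real.sin (η + 2*η + 3*ω) = 0 := by
    have : η + 2*η + 3*ω = ((6*n : ℕ) : ℝ) * π := by rw [hη]; push_cast; ring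
    rw [this, Real.sin_nat_mul_pi]
  rw [hint, c1, s1, s2, s3]
  have b1 := Real.neg_one_le_sin (η - 2*0 - ω)
  have b1' := Real.sin_le_one (η - 2*0 - ω)
  have b2 := Real.neg_one_le_sin (η - 4*0 - 3*ω)
  have b2' := Real.sin_le_one (η - 4*0 - 3*ω)
  have b3 := Real.neg_one_le_sin (η + 2*0 + 3*ω)
  have b3' := Real.sin_le_one (η + 2*0 + 3*ω)
  set X : ℝ := (-(3/16) * 0 - 3/8 * η * 1 + 1/32 * 0 + 1/16 * 0)
      - (-(3/16) * Real.sin (η - 2*0 - ω) - 3/8 * 0 * 1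
          + 1/32 * Real.sin (η - 4*0 - 3*ω) + 1/16 * Real.sin (η + 2*0 + 3*ω)) with hX
  have hnegX : -X ≤ |X| := neg_le_abs X
  have hηbig : 3/8 * η - 1 > M := by
    have : (|ω| + 3*|M| + 3 : ℝ) < n := hn
    nlinarith [abs_nonneg M, abs_nonneg ω]
  have : M < -X := by
    rw [hX]
    norm_num at b1 b1' b2 b2' b3 b3' ⊢
    linarith
  linarith
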